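/- Let p be an odd prime and G a finite group. The following three conditions are equivalent: (i) G is section p-stable; (ii) for all subgroups K ⊴ H ≤ G, the quotient group H/K is p-stable; (iii) for every p-subgroup R of G, the quotient N_G(R)/R is p-stable. -/

import Mathlib

open scoped commutatorElement

/-- `O_p(G)`: the largest normal `p`-subgroup of `G`. -/
def pCore (p : ℕ) (G : Type*) [Group G] : Subgroup G :=
  sSup {N : Subgroup G | N.Normal ∧ IsPGroup p N}

instance relCent_normal {G : Type*} [Group G] (Q : Subgroup G) :
    ((Subgroup.centralizer (Q : Set G)).subgroupOf (Subgroup.normalizer (Q : Set G))).Normal := by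
  rw [← Subgroup.normalizerMonoidHom_ker]
  exact MonoidHom.normal_ker _

/-- A group `G` is `p`-stable if for every `p`-subgroup `Q` and every `x ∈ N_G(Q)` with
`[[a,x],x] = 1` for all `a ∈ Q`, the image of `x` in `N_G(Q)/C_G(Q)` lies in
`O_p(N_G(Q)/C_G(Q))`. -/
def IsPStable (p : ℕ) (G : Type*) [Group G] : Prop :=
  ∀ Q : Subgroup G, IsPGroup p Q →
    ∀ x : Subgroup.normalizer (Q : Set G), (∀ a ∈ Q, ⁅⁅a, (x : G)⁆, (x : G)⁆ = 1) →
      (QuotientGroup.mk x :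
          Subgroup.normalizer (Q : Set G) ⧸ (Subgroup.centralizer (Q : Set G)).subgroupOf (Subgroup.normalizer (Q : Set G))) ∈
        pCore p (Subgroup.normalizer (Q : Set G) ⧸ (Subgroup.centralizer (Q : Set G)).subgroupOf (Subgroup.normalizer (Q : Set G)))

/-- `C_G(Q/R)`: the subgroup of `N_G(Q/R) = N_G(Q) ∩ N_G(R)` of elements acting trivially
on `Q/R`, i.e. those `x` with `[a,x] ∈ R` for all `a ∈ Q`. -/
def sectionCentralizer {G : Type*} [Group G] (Q R : Subgroup G) :
    Subgroup ↥(Subgroup.normalizer (Q : Set G) ⊓ Subgroup.normalizer (R : Set G)) where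
  carrier := {x | ∀ a ∈ Q, ⁅a, (x : G)⁆ ∈ R}
  one_mem' := by
    intro a _
    simpa using one_mem R
  mul_mem' := by
    intro x y hx hy a ha
    have hxR : (x : G) ∈ Subgroup.normalizer (R : Set G) := (Subgroup.mem_inf.mp x.2).2
    have key : ⁅a, ((x * y : ↥(Subgroup.normalizer (Q : Set G) ⊓ Subgroup.normalizer (R : Set G))) : G)⁆ =
        ⁅a, (x : G)⁆ * ((x : G) * ⁅a, (y : G)⁆ * (x : G)⁻¹) := by
      push_cast
      group
    rw [key]
    exact mul_mem (hx a ha) ((Subgroup.mem_normalizer_iff.mp hxR _).mp (hy a ha))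
  inv_mem' := by
    intro x hx a ha
    have hxR : (x : G)⁻¹ ∈ Subgroup.normalizer (R : Set G) := inv_mem (Subgroup.mem_inf.mp x.2).2
    have key : ⁅a, ((x⁻¹ : ↥(Subgroup.normalizer (Q : Set G) ⊓ Subgroup.normalizer (R : Set G))) : G)⁆ =
        (x : G)⁻¹ * ⁅a, (x : G)⁆⁻¹ * ((x : G)⁻¹)⁻¹ := by
      push_cast
      group
    rw [key]
    exact (Subgroup.mem_normalizer_iff.mp hxR _).mp (inv_mem (hx a ha))

instance sectionCentralizer_normal {G : Type*} [Group G] (Q R : Subgroup G) :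
    (sectionCentralizer Q R).Normal := by
  constructor
  intro c hc n a ha
  have hnQ : (n : G) ∈ Subgroup.normalizer (Q : Set G) := (Subgroup.mem_inf.mp n.2).1
  have hnR : (n : G) ∈ Subgroup.normalizer (R : Set G) := (Subgroup.mem_inf.mp n.2).2
  have haQ : (n : G)⁻¹ * a * (n : G) ∈ Q := by
    have := (Subgroup.mem_normalizer_iff.mp (inv_mem hnQ) a).mp ha
    simpa using this
  have key : ⁅a, ((n * c * n⁻¹ : ↥(Subgroup.normalizer (Q : Set G) ⊓ Subgroup.normalizer (R : Set G))) : G)⁆ =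
      (n : G) * ⁅(n : G)⁻¹ * a * (n : G), (c : G)⁆ * (n : G)⁻¹ := by
    push_cast
    group
  rw [key]
  exact (Subgroup.mem_normalizer_iff.mp hnR _).mp (hc _ haQ)

/-- A group `G` is section `p`-stable if for all `p`-subgroups `R ⊴ Q` of `G` and every
`x ∈ N_G(Q/R) = N_G(Q) ∩ N_G(R)` with `[[a,x],x] ∈ R` for all `a ∈ Q`, the image of `x`
in `N_G(Q/R)/C_G(Q/R)` lies in `O_p(N_G(Q/R)/C_G(Q/R))`. -/
def IsSectionPStable (p : ℕ) (G : Type*) [Group G] : Prop :=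
  ∀ Q R : Subgroup G, IsPGroup p Q → R ≤ Q →
    (∀ a ∈ Q, ∀ r ∈ R, a * r * a⁻¹ ∈ R) →
    ∀ x : ↥(Subgroup.normalizer (Q : Set G) ⊓ Subgroup.normalizer (R : Set G)),
      (∀ a ∈ Q, ⁅⁅a, (x : G)⁆, (x : G)⁆ ∈ R) →
      (QuotientGroup.mk x : ↥(Subgroup.normalizer (Q : Set G) ⊓ Subgroup.normalizer (R : Set G)) ⧸ sectionCentralizer Q R) ∈
        pCore p (↥(Subgroup.normalizer (Q : Set G) ⊓ Subgroup.normalizer (R : Set G)) ⧸ sectionCentralizer Q R)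

section pCoreAux

variable {p : ℕ} {G : Type*} [Group G]

theorem le_pCore {N : Subgroup G} (h1 : N.Normal) (h2 : IsPGroup p N) :
    N ≤ pCore p G := le_sSup ⟨h1, h2⟩

theorem pCore_spec [Finite G] : (pCore p G).Normal ∧ IsPGroup p (pCore p G) := by
  classical
  obtain ⟨M, hM, hmax⟩ := Set.Finite.exists_maximalFor id
    {N : Subgroup G | N.Normal ∧ IsPGroup p N} (Set.toFinite _)
    ⟨⊥, inferInstance, IsPGroup.of_bot⟩
  have htop : ∀ N ∈ {N : Subgroup G | N.Normal ∧ IsPGroup p N}, N ≤ M := by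
    intro N hN
    haveI := hM.1; haveI := hN.1
    have hsup : N ⊔ M ∈ {N : Subgroup G | N.Normal ∧ IsPGroup p N} :=
      ⟨Subgroup.sup_normal N M, IsPGroup.to_sup_of_normal_right hN.2 hM.2⟩
    have := hmax hsup le_sup_right
    simp only [id] at this
    exact le_sup_left.trans this
  have heq : pCore p G = M := le_antisymm (sSup_le htop) (le_sSup hM)
  rw [heq]; exact hM

theorem mem_pCore_map {A B : Type*} [Group A] [Group B] (e : A ≃* B) {x : A}
    (hx : x ∈ pCore p A) : e x ∈ pCore p B := by
  have h : pCore p A ≤ (pCore p B).comap e.toMonoidHom := by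
    refine sSup_le fun N hN a ha => ?_
    exact Subgroup.mem_comap.mpr
      (le_sSup (show Subgroup.map e.toMonoidHom N ∈ {N : Subgroup B | N.Normal ∧ IsPGroup p N}
          from ⟨hN.1.map e.toMonoidHom e.surjective, hN.2.map e.toMonoidHom⟩)
        (Subgroup.mem_map_of_mem _ ha))
  exact h hx

theorem mem_pCore_subgroupOf {M : Type*} [Group M] [Finite M] {W : Subgroup M} {x : M}
    (hxW : x ∈ W) (hx : x ∈ pCore p M) : (⟨x, hxW⟩ : W) ∈ pCore p W := by
  obtain ⟨hnorm, hpg⟩ := pCore_spec (p := p) (G := M)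
  refine le_pCore (hnorm.subgroupOf W) ?_ (Subgroup.mem_subgroupOf.mpr hx)
  intro g
  obtain ⟨k, hk⟩ := hpg ⟨((g : W) : M), Subgroup.mem_subgroupOf.mp g.2⟩
  refine ⟨k, Subtype.ext (Subtype.ext ?_)⟩
  have h1 : ((g : W) : M) ^ p ^ k = 1 := by
    simpa using congrArg Subtype.val hk
  simpa using h1

/-- Transport of `pCore` membership along a pair of homomorphisms with equal kernels. -/
theorem pCore_transport {A B₁ B₂ : Type*} [Group A] [Group B₁] [Group B₂] [Finite B₁]
    (Θ₁ : A →* B₁) (Θ₂ : A →* B₂) (hs : Function.Surjective Θ₂) (hker : Θ₁.ker = Θ₂.ker)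
    (x : A) (hx : Θ₁ x ∈ pCore p B₁) : Θ₂ x ∈ pCore p B₂ := by
  have hxr : Θ₁ x ∈ Θ₁.range := MonoidHom.mem_range.mpr ⟨x, rfl⟩
  have hx' : (⟨Θ₁ x, hxr⟩ : Θ₁.range) ∈ pCore p Θ₁.range :=
    mem_pCore_subgroupOf hxr hx
  let e : (A ⧸ Θ₁.ker) ≃* B₂ :=
    (QuotientGroup.quotientMulEquivOfEq hker).trans
      (QuotientGroup.quotientKerEquivOfSurjective Θ₂ hs)
  let e₁ : (A ⧸ Θ₁.ker) ≃* Θ₁.range := QuotientGroup.quotientKerEquivRange Θ₁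
  have hfull := mem_pCore_map (e₁.symm.trans e) hx'
  have he₁ : e₁ (QuotientGroup.mk x) = ⟨Θ₁ x, hxr⟩ := rfl
  have he₁' : e₁.symm ⟨Θ₁ x, hxr⟩ = QuotientGroup.mk x := by
    rw [← he₁, MulEquiv.symm_apply_apply]
  have he : e (QuotientGroup.mk x) = Θ₂ x := by
    show (QuotientGroup.quotientKerEquivOfSurjective Θ₂ hs)
      ((QuotientGroup.quotientMulEquivOfEq hker) (QuotientGroup.mk x)) = Θ₂ x
    rfl
  rw [MulEquiv.trans_apply, he₁', he] at hfull
  exact hfull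

end pCoreAux
section CoreHom

variable {H : Type*} [Group H] (K P : Subgroup H) [hK : K.Normal]

open Subgroup

theorem mk_mem_normalizer_map {v : H} (hv : v ∈ (Subgroup.normalizer (SetLike.coe P))) :
    QuotientGroup.mk' K v ∈ (Subgroup.normalizer (SetLike.coe (P.map (QuotientGroup.mk' K)))) := by
  rw [Subgroup.mem_normalizer_iff]
  intro h
  constructor
  · rintro ⟨a, ha, rfl⟩
    refine ⟨v * a * v⁻¹, (Subgroup.mem_normalizer_iff.mp hv a).mp ha, by
      simp [map_mul, map_inv]⟩
  · rintro ⟨b, hb, hbe⟩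
    have h1 : h = QuotientGroup.mk' K (v⁻¹ * b * v) := by
      rw [map_mul, map_mul, map_inv, hbe]
      group
    rw [h1]
    refine Subgroup.mem_map_of_mem _ ?_
    have := (Subgroup.mem_normalizer_iff.mp (inv_mem hv) b).mp hb
    simpa using this

/-- The natural map from `N_H(P)` to the normalizer of the image of `P` in `H ⧸ K`. -/
def coreHom0 : ↥(Subgroup.normalizer (SetLike.coe P)) →* ↥(Subgroup.normalizer (SetLike.coe (P.map (QuotientGroup.mk' K)))) :=
  ((QuotientGroup.mk' K).comp (Subgroup.normalizer (SetLike.coe P)).subtype).codRestrict _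
    fun v => mk_mem_normalizer_map K P v.2

/-- The natural map from `N_H(P)` to `N(Q')/C(Q')` for `Q'` the image of `P` in `H ⧸ K`. -/
def coreHom : ↥(Subgroup.normalizer (SetLike.coe P)) →*
    (↥(Subgroup.normalizer (SetLike.coe (P.map (QuotientGroup.mk' K)))) ⧸
      (Subgroup.centralizer ((P.map (QuotientGroup.mk' K) : Subgroup (H ⧸ K)) : Set (H ⧸ K))).subgroupOf
        (Subgroup.normalizer (SetLike.coe (P.map (QuotientGroup.mk' K))))) :=
  (QuotientGroup.mk' _).comp (coreHom0 K P)

theorem coreHom0_coe (v : ↥(Subgroup.normalizer (SetLike.coe P))) :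
    ((coreHom0 K P v : ↥(Subgroup.normalizer (SetLike.coe (P.map (QuotientGroup.mk' K))))) : H ⧸ K) =
      QuotientGroup.mk' K (v : H) := rfl

theorem coreHom_apply (v : ↥(Subgroup.normalizer (SetLike.coe P))) :
    coreHom K P v = QuotientGroup.mk' _ (coreHom0 K P v) := rfl

theorem commutator_mem_iff (a v : H) :
    ⁅a, v⁆ ∈ K ↔ (QuotientGroup.mk' K a) * (QuotientGroup.mk' K v) =
      (QuotientGroup.mk' K v) * (QuotientGroup.mk' K a) := by
  rw [← commutatorElement_eq_one_iff_mul_comm, ← map_commutatorElement,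
    ← MonoidHom.mem_ker, QuotientGroup.ker_mk']

theorem coreHom_eq_one_iff (v : ↥(Subgroup.normalizer (SetLike.coe P))) :
    coreHom K P v = 1 ↔ ∀ a ∈ P, ⁅a, (v : H)⁆ ∈ K := by
  rw [coreHom_apply]
  rw [show ((QuotientGroup.mk' _) (coreHom0 K P v) = 1) ↔ _ from
    QuotientGroup.eq_one_iff (coreHom0 K P v)]
  rw [Subgroup.mem_subgroupOf, Subgroup.mem_centralizer_iff]
  constructor
  · intro hc a ha
    rw [commutator_mem_iff]
    exact hc (QuotientGroup.mk' K a) (Subgroup.mem_map_of_mem _ ha)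
  · rintro hc h ⟨a, ha, rfl⟩
    exact (commutator_mem_iff K a v).mp (hc a ha)

theorem coreHom_surjective
    (HF : ∀ h : H, h ∈ (Subgroup.normalizer (SetLike.coe (P ⊔ K))) → ∃ k ∈ K, k⁻¹ * h ∈ (Subgroup.normalizer (SetLike.coe P))) :
    Function.Surjective (coreHom K P) := by
  intro y
  obtain ⟨w, rfl⟩ := QuotientGroup.mk'_surjective _ y
  obtain ⟨h, hh⟩ := QuotientGroup.mk'_surjective K (w : H ⧸ K)
  have e : Subgroup.comap (QuotientGroup.mk' K) (P.map (QuotientGroup.mk' K)) = P ⊔ K := by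
    rw [Subgroup.comap_map_eq, QuotientGroup.ker_mk']
  have hQ : ∀ b : H, b ∈ P ⊔ K ↔
      QuotientGroup.mk' K b ∈ P.map (QuotientGroup.mk' K) := by
    intro b; rw [← e, Subgroup.mem_comap]
  have hnorm : h ∈ (Subgroup.normalizer (SetLike.coe (P ⊔ K))) := by
    rw [Subgroup.mem_normalizer_iff]
    intro a
    rw [hQ, hQ, map_mul, map_mul, map_inv, hh]
    exact Subgroup.mem_normalizer_iff.mp w.2 _
  obtain ⟨k, hk, hkh⟩ := HF h hnorm
  refine ⟨⟨k⁻¹ * h, hkh⟩, ?_⟩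
  have hw : coreHom0 K P ⟨k⁻¹ * h, hkh⟩ = w := by
    apply Subtype.ext
    rw [coreHom0_coe]
    show QuotientGroup.mk' K (k⁻¹ * h) = (w : H ⧸ K)
    rw [map_mul, map_inv, hh]
    have h1 : QuotientGroup.mk' K k = 1 := (QuotientGroup.eq_one_iff k).mpr hk
    rw [h1]; group
  rw [coreHom_apply, hw]

end CoreHom
open Pointwise

theorem mem_conj_smul {X : Type*} [Group X] (P : Subgroup X) (g a : X) :
    a ∈ MulAut.conj g • P ↔ g⁻¹ * a * g ∈ P := by
  rw [Subgroup.mem_pointwise_smul_iff_inv_smul_mem]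
  simp [MulAut.smul_def]

theorem conj_smul_eq_iff {X : Type*} [Group X] {P : Subgroup X} {g : X} :
    MulAut.conj g • P = P ↔ g ∈ (Subgroup.normalizer (SetLike.coe P)) := by
  rw [Subgroup.mem_normalizer_iff]
  constructor
  · intro h a
    constructor
    · intro ha
      have h1 : g * a * g⁻¹ ∈ MulAut.conj g • P := by
        rw [mem_conj_smul]
        simpa [mul_assoc] using ha
      rwa [h] at h1
    · intro ha
      have h1 : g * a * g⁻¹ ∈ MulAut.conj g • P := h.symm ▸ ha
      have h2 := (mem_conj_smul P g _).mp h1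
      simpa [mul_assoc] using h2
  · intro h
    ext a
    rw [mem_conj_smul]
    constructor
    · intro hx
      have := (h (g⁻¹ * a * g)).mp hx
      simpa [mul_assoc] using this
    · intro ha
      refine (h (g⁻¹ * a * g)).mpr ?_
      simpa [mul_assoc] using ha

theorem map_subtype_conj_smul {X : Type*} [Group X] (Qt : Subgroup X) (q : ↥Qt)
    (T : Subgroup ↥Qt) :
    (MulAut.conj q • T).map Qt.subtype = MulAut.conj (q : X) • T.map Qt.subtype := by
  ext a
  rw [mem_conj_smul]
  simp only [Subgroup.mem_map, Subgroup.coe_subtype]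
  constructor
  · rintro ⟨t, ht, rfl⟩
    rw [mem_conj_smul] at ht
    refine ⟨q⁻¹ * t * q, ht, ?_⟩
    simp [mul_assoc]
  · rintro ⟨s, hs, hse⟩
    have haQ : a ∈ Qt := by
      have h2 : a = (q : X) * s * (q : X)⁻¹ := by
        rw [hse]; group
      rw [h2]
      exact mul_mem (mul_mem q.2 s.2) (inv_mem q.2)
    refine ⟨⟨a, haQ⟩, ?_, rfl⟩
    rw [mem_conj_smul]
    have h3 : (q⁻¹ * ⟨a, haQ⟩ * q : ↥Qt) = s := by
      apply Subtype.ext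
      simp only [Subgroup.coe_mul, Subgroup.coe_inv]
      rw [hse]
    rw [h3]
    exact hs

theorem frattini_adjust {X : Type*} [Group X] [Finite X] {p : ℕ} [Fact p.Prime]
    {K Qt : Subgroup X} [K.Normal] (P0 : Sylow p ↥Qt)
    (hsup : ((P0 : Subgroup ↥Qt).map Qt.subtype) ⊔ K = Qt)
    {h : X} (hh : h ∈ (Subgroup.normalizer (SetLike.coe Qt))) :
    ∃ k ∈ K, k⁻¹ * h ∈ (Subgroup.normalizer (SetLike.coe ((P0 : Subgroup ↥Qt).map Qt.subtype))) := by
  classical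
  set P : Subgroup X := (P0 : Subgroup ↥Qt).map Qt.subtype with hP
  have hPQ : P ≤ Qt := Subgroup.map_subtype_le _
  have hPp : IsPGroup p P := P0.2.map _
  set P' : Subgroup X := MulAut.conj h • P with hP'
  have hP'p : IsPGroup p P' := by
    rw [hP', Subgroup.pointwise_smul_def]; exact hPp.map _
  have hP'le : P' ≤ Qt := by
    intro a ha
    rw [hP', mem_conj_smul] at ha
    have h2 := (Subgroup.mem_normalizer_iff.mp hh (h⁻¹ * a * h)).mp (hPQ ha)
    simpa [mul_assoc] using h2
  have hcard' : Nat.card P' = Nat.card P := by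
    rw [hP']
    exact (Nat.card_congr (Subgroup.equivSMul (MulAut.conj h) P).toEquiv).symm
  set P'' : Subgroup ↥Qt := P'.subgroupOf Qt with hP''
  have hP''p : IsPGroup p P'' := hP'p.of_equiv (Subgroup.subgroupOfEquivOfLe hP'le).symm
  obtain ⟨S, hS⟩ := hP''p.exists_le_sylow
  obtain ⟨q, hq⟩ := MulAction.exists_smul_eq ↥Qt S P0
  have hcard'' : Nat.card P'' = Nat.card P' :=
    Nat.card_congr (Subgroup.subgroupOfEquivOfLe hP'le).toEquiv
  have hcardP : Nat.card P = Nat.card (P0 : Subgroup ↥Qt) :=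
    (Nat.card_congr ((P0 : Subgroup ↥Qt).equivMapOfInjective Qt.subtype
      Qt.subtype_injective).toEquiv).symm
  have hcardS : Nat.card (S : Subgroup ↥Qt) = Nat.card (P0 : Subgroup ↥Qt) := by
    rw [S.card_eq_multiplicity, P0.card_eq_multiplicity]
  have hPS : P'' = S := Subgroup.eq_of_le_of_card_ge hS (by
    rw [hcardS, ← hcardP, ← hcard', ← hcard''])
  have hconjq : MulAut.conj q • P'' = (P0 : Subgroup ↥Qt) := by
    have := congrArg (fun (T : Sylow p ↥Qt) => (T : Subgroup ↥Qt)) hq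
    change ((q • S : Sylow p ↥Qt) : Subgroup ↥Qt) = (P0 : Subgroup ↥Qt) at this
    rw [Sylow.coe_subgroup_smul] at this
    rw [hPS]
    exact this
  have hmap := congrArg (Subgroup.map Qt.subtype) hconjq
  rw [map_subtype_conj_smul] at hmap
  have hmapP'' : P''.map Qt.subtype = P' := by
    rw [hP'', Subgroup.subgroupOf_map_subtype, inf_eq_left.mpr hP'le]
  rw [hmapP''] at hmap
  -- hmap : conj q_X • P' = P
  have hfix : MulAut.conj ((q : X) * h) • P = P := by
    rw [map_mul, mul_smul, ← hP']
    exact hmap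
  have hqh : (q : X) * h ∈ (Subgroup.normalizer (SetLike.coe P)) := conj_smul_eq_iff.mp hfix
  have hqmem : (q : X) ∈ (↑(P ⊔ K) : Set X) := by rw [hsup]; exact q.2
  rw [Subgroup.mul_normal] at hqmem
  obtain ⟨u, hu, k, hk, huk⟩ := hqmem
  refine ⟨k⁻¹, inv_mem hk, ?_⟩
  rw [inv_inv]
  have h1 : k * h = u⁻¹ * ((q : X) * h) := by rw [← huk]; group
  rw [h1]
  exact mul_mem (inv_mem (Subgroup.le_normalizer hu)) hqh
section Implications

variable {p : ℕ} {G : Type*} [Group G]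

theorem subgroupOf_inf_normalizer_eq {Q R : Subgroup G} (hQN : Q ≤ (Subgroup.normalizer (SetLike.coe R))) :
    ((Subgroup.normalizer (SetLike.coe Q)) ⊓ (Subgroup.normalizer (SetLike.coe R))).subgroupOf (Subgroup.normalizer (SetLike.coe R)) =
      (Subgroup.normalizer (SetLike.coe (Q.subgroupOf (Subgroup.normalizer (SetLike.coe R))))) := by
  ext v
  constructor
  · intro hv0
    have hv := Subgroup.mem_subgroupOf.mp hv0
    rw [Subgroup.mem_normalizer_iff]
    intro a
    rw [Subgroup.mem_subgroupOf, Subgroup.mem_subgroupOf]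
    have h2 := Subgroup.mem_normalizer_iff.mp (Subgroup.mem_inf.mp hv).1 (a : G)
    simpa using h2
  · intro hv
    rw [Subgroup.mem_normalizer_iff] at hv
    rw [Subgroup.mem_subgroupOf, Subgroup.mem_inf]
    refine ⟨?_, v.2⟩
    rw [Subgroup.mem_normalizer_iff]
    intro g
    constructor
    · intro hg
      have h2 := (hv ⟨g, hQN hg⟩).mp (Subgroup.mem_subgroupOf.mpr hg)
      rw [Subgroup.mem_subgroupOf] at h2
      simpa using h2
    · intro hg
      have hgN : g ∈ (Subgroup.normalizer (SetLike.coe R)) := by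
        have h3 : g = (v : G)⁻¹ * ((v : G) * g * (v : G)⁻¹) * (v : G) := by group
        rw [h3]
        exact mul_mem (mul_mem (inv_mem v.2) (hQN hg)) v.2
      have h2 := (hv ⟨g, hgN⟩).mpr (by
        rw [Subgroup.mem_subgroupOf]
        simpa using hg)
      exact Subgroup.mem_subgroupOf.mp h2

/-- The isomorphism between `N_G(Q) ⊓ N_G(R)` and the normalizer of
`Q.subgroupOf (Subgroup.normalizer (SetLike.coe R))` inside `(Subgroup.normalizer (SetLike.coe R))`. -/
def caEquiv (Q R : Subgroup G) (hQN : Q ≤ (Subgroup.normalizer (SetLike.coe R))) :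
    ↥((Subgroup.normalizer (SetLike.coe Q)) ⊓ (Subgroup.normalizer (SetLike.coe R))) ≃* ↥(Subgroup.normalizer (SetLike.coe (Q.subgroupOf (Subgroup.normalizer (SetLike.coe R))))) :=
  (Subgroup.subgroupOfEquivOfLe inf_le_right).symm.trans
    (MulEquiv.subgroupCongr (subgroupOf_inf_normalizer_eq hQN))

theorem caEquiv_coe (Q R : Subgroup G) (hQN : Q ≤ (Subgroup.normalizer (SetLike.coe R)))
    (y : ↥((Subgroup.normalizer (SetLike.coe Q)) ⊓ (Subgroup.normalizer (SetLike.coe R)))) :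
    ((caEquiv Q R hQN y : ↥(Subgroup.normalizer (SetLike.coe R))) : G) = (y : G) := rfl

theorem stable_B_to_C
    (hB : ∀ (H : Subgroup G) (K : Subgroup H) (hK : K.Normal),
      letI := hK
      IsPStable p (H ⧸ K)) :
    ∀ R : Subgroup G, IsPGroup p R →
      IsPStable p ((Subgroup.normalizer (SetLike.coe R)) ⧸ R.subgroupOf (Subgroup.normalizer (SetLike.coe R))) :=
  fun R _ => hB (Subgroup.normalizer (SetLike.coe R)) (R.subgroupOf (Subgroup.normalizer (SetLike.coe R))) Subgroup.normal_in_normalizer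

theorem stable_C_to_A [Finite G]
    (hC : ∀ R : Subgroup G, IsPGroup p R →
      IsPStable p ((Subgroup.normalizer (SetLike.coe R)) ⧸ R.subgroupOf (Subgroup.normalizer (SetLike.coe R)))) :
    IsSectionPStable p G := by
  intro Q R hQ hRQ hconj x hx
  haveI : (R.subgroupOf (Subgroup.normalizer (SetLike.coe R))).Normal := Subgroup.normal_in_normalizer
  have hQN : Q ≤ (Subgroup.normalizer (SetLike.coe R)) := by
    intro a ha
    rw [Subgroup.mem_normalizer_iff]
    intro r
    constructor
    · intro hr; exact hconj a ha r hr
    · intro hr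
      have h2 := hconj a⁻¹ (inv_mem ha) _ hr
      simpa [mul_assoc] using h2
  have hPp : IsPGroup p (Q.subgroupOf (Subgroup.normalizer (SetLike.coe R))) :=
    hQ.of_equiv (Subgroup.subgroupOfEquivOfLe hQN).symm
  have hstab := hC R (hQ.to_le hRQ)
  have hQ'p : IsPGroup p ((Q.subgroupOf (Subgroup.normalizer (SetLike.coe R))).map
      (QuotientGroup.mk' (R.subgroupOf (Subgroup.normalizer (SetLike.coe R))))) := hPp.map _
  have hcomm : ∀ abar ∈ (Q.subgroupOf (Subgroup.normalizer (SetLike.coe R))).map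
      (QuotientGroup.mk' (R.subgroupOf (Subgroup.normalizer (SetLike.coe R)))),
      ⁅⁅abar, ((coreHom0 (R.subgroupOf (Subgroup.normalizer (SetLike.coe R))) (Q.subgroupOf (Subgroup.normalizer (SetLike.coe R)))
          (caEquiv Q R hQN x) : _) : ↥(Subgroup.normalizer (SetLike.coe R)) ⧸ R.subgroupOf (Subgroup.normalizer (SetLike.coe R)))⁆,
        ((coreHom0 (R.subgroupOf (Subgroup.normalizer (SetLike.coe R))) (Q.subgroupOf (Subgroup.normalizer (SetLike.coe R)))
          (caEquiv Q R hQN x) : _) : ↥(Subgroup.normalizer (SetLike.coe R)) ⧸ R.subgroupOf (Subgroup.normalizer (SetLike.coe R)))⁆ = 1 := by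
    rintro abar ⟨a, ha, rfl⟩
    rw [coreHom0_coe, ← map_commutatorElement, ← map_commutatorElement]
    have heq : ∀ z : ↥(Subgroup.normalizer (SetLike.coe R)), QuotientGroup.mk' (R.subgroupOf (Subgroup.normalizer (SetLike.coe R))) z = 1 ↔
        z ∈ R.subgroupOf (Subgroup.normalizer (SetLike.coe R)) := fun z => QuotientGroup.eq_one_iff z
    rw [heq, Subgroup.mem_subgroupOf]
    have hc : ((⁅⁅a, ((caEquiv Q R hQN x : _) : ↥(Subgroup.normalizer (SetLike.coe R)))⁆,
        ((caEquiv Q R hQN x : _) : ↥(Subgroup.normalizer (SetLike.coe R)))⁆ : ↥(Subgroup.normalizer (SetLike.coe R))) : G) =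
        ⁅⁅(a : G), (x : G)⁆, (x : G)⁆ := by
      simp only [commutatorElement_def, Subgroup.coe_mul, Subgroup.coe_inv, caEquiv_coe]
    rw [hc]
    exact hx (a : G) (Subgroup.mem_subgroupOf.mp ha)
  have hmem := hstab ((Q.subgroupOf (Subgroup.normalizer (SetLike.coe R))).map
      (QuotientGroup.mk' (R.subgroupOf (Subgroup.normalizer (SetLike.coe R))))) hQ'p
    (coreHom0 (R.subgroupOf (Subgroup.normalizer (SetLike.coe R))) (Q.subgroupOf (Subgroup.normalizer (SetLike.coe R))) (caEquiv Q R hQN x)) hcomm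
  have hker : ((coreHom (R.subgroupOf (Subgroup.normalizer (SetLike.coe R))) (Q.subgroupOf (Subgroup.normalizer (SetLike.coe R)))).comp
      (caEquiv Q R hQN).toMonoidHom).ker =
      (QuotientGroup.mk' (sectionCentralizer Q R)).ker := by
    ext v
    rw [MonoidHom.mem_ker, MonoidHom.mem_ker, MonoidHom.comp_apply,
      MulEquiv.coe_toMonoidHom, coreHom_eq_one_iff]
    have heq : QuotientGroup.mk' (sectionCentralizer Q R) v = 1 ↔
        v ∈ sectionCentralizer Q R := QuotientGroup.eq_one_iff v
    rw [heq]
    have hcoe : ∀ (a : ↥(Subgroup.normalizer (SetLike.coe R))),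
        ((⁅a, ((caEquiv Q R hQN v : _) : ↥(Subgroup.normalizer (SetLike.coe R)))⁆ : ↥(Subgroup.normalizer (SetLike.coe R))) : G) =
        ⁅(a : G), (v : G)⁆ := by
      intro a
      simp only [commutatorElement_def, Subgroup.coe_mul, Subgroup.coe_inv, caEquiv_coe]
    constructor
    · intro hv g hg
      have h2 := hv ⟨g, hQN hg⟩ (Subgroup.mem_subgroupOf.mpr hg)
      rw [Subgroup.mem_subgroupOf, hcoe] at h2
      exact h2
    · intro hv a ha
      rw [Subgroup.mem_subgroupOf, hcoe]
      exact hv (a : G) (Subgroup.mem_subgroupOf.mp ha)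
  exact pCore_transport (p := p)
    ((coreHom (R.subgroupOf (Subgroup.normalizer (SetLike.coe R))) (Q.subgroupOf (Subgroup.normalizer (SetLike.coe R)))).comp
      (caEquiv Q R hQN).toMonoidHom)
    (QuotientGroup.mk' (sectionCentralizer Q R))
    (QuotientGroup.mk'_surjective _) hker x hmem

end Implications
section AtoB

open Pointwise

theorem commutator_mem_of_normalizer {X : Type*} [Group X] {P : Subgroup X} {a v : X}
    (ha : a ∈ P) (hv : v ∈ (Subgroup.normalizer (SetLike.coe P))) : ⁅a, v⁆ ∈ P := by
  have h1 : v * a⁻¹ * v⁻¹ ∈ P := (Subgroup.mem_normalizer_iff.mp hv a⁻¹).mp (inv_mem ha)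
  have h2 : a * (v * a⁻¹ * v⁻¹) ∈ P := mul_mem ha h1
  simpa [commutatorElement_def, mul_assoc] using h2

theorem coe_mem_normalizer_map {G : Type*} [Group G] {H : Subgroup G} {P : Subgroup ↥H}
    {v : ↥H} (hv : v ∈ (Subgroup.normalizer (SetLike.coe P))) : (v : G) ∈ (Subgroup.normalizer (SetLike.coe (P.map H.subtype))) := by
  rw [Subgroup.mem_normalizer_iff]
  intro g
  constructor
  · rintro ⟨a, ha, rfl⟩
    refine ⟨v * a * v⁻¹, (Subgroup.mem_normalizer_iff.mp hv a).mp ha, by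
      simp [mul_assoc]⟩
  · rintro ⟨b, hb, hbe⟩
    have hg : g = ((v⁻¹ * b * v : ↥H) : G) := by
      have h1 : g = (v : G)⁻¹ * ((v : G) * g * (v : G)⁻¹) * (v : G) := by group
      rw [h1, ← hbe]
      simp [mul_assoc]
    rw [hg]
    have h2 := (Subgroup.mem_normalizer_iff.mp (inv_mem hv) b).mp hb
    have h3 : v⁻¹ * b * v ∈ P := by simpa using h2
    exact Subgroup.mem_map.mpr ⟨v⁻¹ * b * v, h3, rfl⟩

theorem mem_inf_normalizer {X : Type*} [Group X] {P K : Subgroup X} [hKn : K.Normal] {v : X}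
    (hv : v ∈ (Subgroup.normalizer (SetLike.coe P))) : v ∈ (Subgroup.normalizer (SetLike.coe (P ⊓ K))) := by
  rw [Subgroup.mem_normalizer_iff] at hv ⊢
  intro a
  rw [Subgroup.mem_inf, Subgroup.mem_inf]
  constructor
  · rintro ⟨h1, h2⟩
    exact ⟨(hv a).mp h1, hKn.conj_mem a h2 v⟩
  · rintro ⟨h1, h2⟩
    refine ⟨(hv a).mpr h1, ?_⟩
    have h3 := hKn.conj_mem _ h2 v⁻¹
    simpa [mul_assoc] using h3

/-- The natural map from `N_H(P)` into `N_G(P) ⊓ N_G(P ⊓ K)` (identifying `P`, `P ⊓ K`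
with their images in `G`). -/
def abHom {G : Type*} [Group G] (H : Subgroup G) (K P : Subgroup ↥H) [K.Normal] :
    ↥(Subgroup.normalizer (SetLike.coe P)) →*
      ↥((Subgroup.normalizer (SetLike.coe (P.map H.subtype))) ⊓ (Subgroup.normalizer (SetLike.coe ((P ⊓ K).map H.subtype)))) :=
  (H.subtype.comp (Subgroup.normalizer (SetLike.coe P)).subtype).codRestrict _ fun v => Subgroup.mem_inf.mpr
    ⟨coe_mem_normalizer_map v.2, coe_mem_normalizer_map (mem_inf_normalizer v.2)⟩

theorem abHom_coe {G : Type*} [Group G] (H : Subgroup G) (K P : Subgroup ↥H) [K.Normal]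
    (v : ↥(Subgroup.normalizer (SetLike.coe P))) : ((abHom H K P v : _) : G) = ((v : ↥H) : G) := rfl

/-- Transport of the final `pCore` membership along an equality of subgroups. -/
theorem pcore_goal_transport {p : ℕ} {X : Type*} [Group X] {A B : Subgroup X} (h : A = B)
    (y : ↥(Subgroup.normalizer (SetLike.coe A)))
    (hy : (QuotientGroup.mk y : ↥(Subgroup.normalizer (SetLike.coe A)) ⧸
        (Subgroup.centralizer (A : Set X)).subgroupOf (Subgroup.normalizer (SetLike.coe A))) ∈
      pCore p (↥(Subgroup.normalizer (SetLike.coe A)) ⧸ (Subgroup.centralizer (A : Set X)).subgroupOf (Subgroup.normalizer (SetLike.coe A)))) :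
    (QuotientGroup.mk (⟨(y : X), by rw [← h]; exact y.2⟩ : ↥(Subgroup.normalizer (SetLike.coe B))) :
        ↥(Subgroup.normalizer (SetLike.coe B)) ⧸ (Subgroup.centralizer (B : Set X)).subgroupOf (Subgroup.normalizer (SetLike.coe B))) ∈
      pCore p (↥(Subgroup.normalizer (SetLike.coe B)) ⧸ (Subgroup.centralizer (B : Set X)).subgroupOf (Subgroup.normalizer (SetLike.coe B))) := by
  subst h
  exact hy

set_option maxHeartbeats 1000000 in
theorem stable_A_to_B {p : ℕ} (hp : p.Prime) {G : Type*} [Group G] [Finite G]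
    (hA : IsSectionPStable p G) :
    ∀ (H : Subgroup G) (K : Subgroup H) (hK : K.Normal),
      letI := hK
      IsPStable p (H ⧸ K) := by
  haveI : Fact p.Prime := ⟨hp⟩
  intro H K hK
  haveI := hK
  intro Q' hQ' x' hx'
  set Qt : Subgroup ↥H := Q'.comap (QuotientGroup.mk' K) with hQt
  obtain ⟨P0⟩ : Nonempty (Sylow p ↥Qt) := inferInstance
  haveI : (K.subgroupOf Qt).Normal := hK.subgroupOf _
  set P : Subgroup ↥H := (P0 : Subgroup ↥Qt).map Qt.subtype with hPdef
  have hKQt : K ≤ Qt := by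
    intro k hk
    rw [hQt, Subgroup.mem_comap]
    have h1 : QuotientGroup.mk' K k = 1 := (QuotientGroup.eq_one_iff k).mpr hk
    rw [h1]; exact one_mem _
  -- the quotient of Qt by K is a p-group
  have hK0p : IsPGroup p (↥Qt ⧸ K.subgroupOf Qt) := by
    intro g
    refine QuotientGroup.induction_on g ?_
    intro a
    obtain ⟨n, hn⟩ := hQ' ⟨QuotientGroup.mk' K (a : ↥H), Subgroup.mem_comap.mp a.2⟩
    refine ⟨n, ?_⟩
    rw [← QuotientGroup.mk_pow, QuotientGroup.eq_one_iff, Subgroup.mem_subgroupOf,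
      ← QuotientGroup.eq_one_iff]
    have h1 : ((a : ↥H) : ↥H ⧸ K) ^ p ^ n = 1 := by
      have := congrArg Subtype.val hn
      simpa using this
    have h2 : (((a ^ p ^ n : ↥Qt) : ↥H) : ↥H ⧸ K) = ((a : ↥H) : ↥H ⧸ K) ^ p ^ n := by
      push_cast
      rfl
    rw [show (QuotientGroup.mk ((a ^ p ^ n : ↥Qt) : ↥H) : ↥H ⧸ K) =
      (((a ^ p ^ n : ↥Qt) : ↥H) : ↥H ⧸ K) from rfl]
    rw [h2, h1]
  -- the Sylow subgroup generates Qt over K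
  have hsupTop : K.subgroupOf Qt ⊔ (P0 : Subgroup ↥Qt) = ⊤ := by
    have hJK := Subgroup.index_dvd_of_le
      (le_sup_left : K.subgroupOf Qt ≤ _ ⊔ (P0 : Subgroup ↥Qt))
    have hJP := Subgroup.index_dvd_of_le
      (le_sup_right : (P0 : Subgroup ↥Qt) ≤ K.subgroupOf Qt ⊔ _)
    obtain ⟨n, hn⟩ := hK0p.exists_card_eq
    rw [← Subgroup.index_eq_card] at hn
    rw [hn] at hJK
    have hnd := P0.not_dvd_index
    obtain ⟨m, hm, hJ⟩ := (Nat.dvd_prime_pow hp).mp hJK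
    rcases Nat.eq_zero_or_pos m with hm0 | hm0
    · rw [← Subgroup.index_eq_one, hJ, hm0, pow_zero]
    · exfalso
      refine hnd (dvd_trans ?_ hJP)
      rw [hJ]
      exact dvd_pow_self p hm0.ne'
  have hPK : P ⊔ K = Qt := by
    have h4 := congrArg (Subgroup.map Qt.subtype) hsupTop
    rw [Subgroup.map_sup, Subgroup.subgroupOf_map_subtype, inf_eq_left.mpr hKQt,
      ← MonoidHom.range_eq_map, Subgroup.range_subtype] at h4
    rw [hPdef, sup_comm]
    exact h4
  -- image of P in H/K is Q'
  have hQ'eq : P.map (QuotientGroup.mk' K) = Q' := by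
    have hmapK : K.map (QuotientGroup.mk' K) = ⊥ := by
      apply le_antisymm _ bot_le
      rintro _ ⟨k, hk, rfl⟩
      simpa [Subgroup.mem_bot] using (QuotientGroup.eq_one_iff k).mpr hk
    have h5 := congrArg (Subgroup.map (QuotientGroup.mk' K)) hPK
    rw [Subgroup.map_sup, hmapK, sup_bot_eq, hQt,
      Subgroup.map_comap_eq_self_of_surjective (QuotientGroup.mk'_surjective K)] at h5
    exact h5
  -- lift x' to an element normalizing P
  obtain ⟨xt, hxt⟩ := QuotientGroup.mk'_surjective K (x' : ↥H ⧸ K)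
  have hxtN : xt ∈ (Subgroup.normalizer (SetLike.coe Qt)) := by
    rw [Subgroup.mem_normalizer_iff]
    intro a
    rw [hQt, Subgroup.mem_comap, Subgroup.mem_comap, map_mul, map_mul, map_inv, hxt]
    exact Subgroup.mem_normalizer_iff.mp x'.2 _
  obtain ⟨k, hkK, hkP⟩ := frattini_adjust P0 (by rw [← hPdef]; exact hPK) hxtN
  rw [← hPdef] at hkP
  have hxPmk : QuotientGroup.mk' K (k⁻¹ * xt) = (x' : ↥H ⧸ K) := by
    have h1 : QuotientGroup.mk' K k = 1 := (QuotientGroup.eq_one_iff k).mpr hkK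
    rw [map_mul, map_inv, h1, inv_one, one_mul, hxt]
  -- apply section p-stability in G
  have hQgp : IsPGroup p (P.map H.subtype) := (P0.2.map Qt.subtype).map H.subtype
  have hRgQg : (P ⊓ K).map H.subtype ≤ P.map H.subtype := Subgroup.map_mono inf_le_left
  have hconj : ∀ a ∈ P.map H.subtype, ∀ r ∈ (P ⊓ K).map H.subtype,
      a * r * a⁻¹ ∈ (P ⊓ K).map H.subtype := by
    rintro _ ⟨a0, ha0, rfl⟩ _ ⟨r0, hr0, rfl⟩
    have h6 : a0 * r0 * a0⁻¹ ∈ P ⊓ K := Subgroup.mem_inf.mpr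
      ⟨mul_mem (mul_mem ha0 (Subgroup.mem_inf.mp hr0).1) (inv_mem ha0),
        hK.conj_mem _ (Subgroup.mem_inf.mp hr0).2 a0⟩
    exact Subgroup.mem_map.mpr ⟨a0 * r0 * a0⁻¹, h6, rfl⟩
  have hxcomm : ∀ a ∈ P.map H.subtype,
      ⁅⁅a, ((abHom H K P ⟨k⁻¹ * xt, hkP⟩ : _) : G)⁆,
        ((abHom H K P ⟨k⁻¹ * xt, hkP⟩ : _) : G)⁆ ∈ (P ⊓ K).map H.subtype := by
    rintro _ ⟨a0, ha0, rfl⟩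
    have hcP : ⁅⁅a0, k⁻¹ * xt⁆, k⁻¹ * xt⁆ ∈ P :=
      commutator_mem_of_normalizer (commutator_mem_of_normalizer ha0 hkP) hkP
    have hcK : ⁅⁅a0, k⁻¹ * xt⁆, k⁻¹ * xt⁆ ∈ K := by
      have h6 : QuotientGroup.mk' K ⁅⁅a0, k⁻¹ * xt⁆, k⁻¹ * xt⁆ = 1 := by
        rw [map_commutatorElement, map_commutatorElement, hxPmk]
        exact hx' (QuotientGroup.mk' K a0) (hQ'eq ▸ Subgroup.mem_map_of_mem _ ha0)
      exact (QuotientGroup.eq_one_iff _).mp h6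
    refine Subgroup.mem_map.mpr ⟨⁅⁅a0, k⁻¹ * xt⁆, k⁻¹ * xt⁆,
      Subgroup.mem_inf.mpr ⟨hcP, hcK⟩, ?_⟩
    rw [abHom_coe]
    rfl
  have hmemA := hA (P.map H.subtype) ((P ⊓ K).map H.subtype) hQgp hRgQg hconj
    (abHom H K P ⟨k⁻¹ * xt, hkP⟩) hxcomm
  -- kernels agree
  have hker : ((QuotientGroup.mk'
      (sectionCentralizer (P.map H.subtype) ((P ⊓ K).map H.subtype))).comp
        (abHom H K P)).ker = (coreHom K P).ker := by
    ext v
    rw [MonoidHom.mem_ker, MonoidHom.mem_ker, MonoidHom.comp_apply, coreHom_eq_one_iff]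
    rw [show ((QuotientGroup.mk' (sectionCentralizer (P.map H.subtype)
        ((P ⊓ K).map H.subtype))) (abHom H K P v) = 1 ↔ _) from
      QuotientGroup.eq_one_iff (abHom H K P v)]
    constructor
    · intro hv a ha
      have h7 := hv (H.subtype a) (Subgroup.mem_map_of_mem _ ha)
      have h8 : ⁅(H.subtype a : G), ((abHom H K P v : _) : G)⁆ =
          ((⁅a, (v : ↥H)⁆ : ↥H) : G) := by
        rw [abHom_coe]
        rfl
      rw [h8] at h7
      obtain ⟨s, hs, hse⟩ := Subgroup.mem_map.mp h7
      have h9 : s = ⁅a, (v : ↥H)⁆ := Subtype.ext hse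
      rw [h9] at hs
      exact (Subgroup.mem_inf.mp hs).2
    · intro hv g hg
      rcases Subgroup.mem_map.mp hg with ⟨a0, ha0, rfl⟩
      have h9 : ⁅a0, (v : ↥H)⁆ ∈ P ⊓ K := Subgroup.mem_inf.mpr
        ⟨commutator_mem_of_normalizer ha0 v.2, hv a0 ha0⟩
      refine Subgroup.mem_map.mpr ⟨⁅a0, (v : ↥H)⁆, h9, ?_⟩
      rw [abHom_coe]
      rfl
  have hsurj : Function.Surjective (coreHom K P) := by
    refine coreHom_surjective K P ?_
    intro h hh
    rw [hPK] at hh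
    obtain ⟨k1, hk1, hk1P⟩ := frattini_adjust P0 (by rw [← hPdef]; exact hPK) hh
    rw [← hPdef] at hk1P
    exact ⟨k1, hk1, hk1P⟩
  have hres := pCore_transport (p := p)
    ((QuotientGroup.mk' (sectionCentralizer (P.map H.subtype)
      ((P ⊓ K).map H.subtype))).comp (abHom H K P))
    (coreHom K P) hsurj hker ⟨k⁻¹ * xt, hkP⟩ hmemA
  have htrans := pcore_goal_transport (p := p) hQ'eq
    (coreHom0 K P ⟨k⁻¹ * xt, hkP⟩) hres
  have hxeq : (⟨((coreHom0 K P ⟨k⁻¹ * xt, hkP⟩ : _) : ↥H ⧸ K), by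
      rw [← hQ'eq]; exact (coreHom0 K P ⟨k⁻¹ * xt, hkP⟩).2⟩ : ↥(Subgroup.normalizer (SetLike.coe Q'))) = x' :=
    Subtype.ext (by rw [coreHom0_coe]; exact hxPmk)
  rwa [hxeq] at htrans

end AtoB

/-- For a finite group `G` and an odd prime `p`, the following are equivalent:
(i) `G` is section `p`-stable; (ii) every section `H/K` (`K ⊴ H ≤ G`) is `p`-stable;
(iii) `N_G(R)/R` is `p`-stable for every `p`-subgroup `R` of `G`. -/
theorem sectionPStable_iff (p : ℕ) (hp : p.Prime) (hodd : Odd p)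
    (G : Type*) [Group G] [Finite G] :
    (IsSectionPStable p G ↔
        ∀ (H : Subgroup G) (K : Subgroup H) (hK : K.Normal),
          letI := hK
          IsPStable p (H ⧸ K)) ∧
      (IsSectionPStable p G ↔
        ∀ R : Subgroup G, IsPGroup p R →
          IsPStable p (Subgroup.normalizer (R : Set G) ⧸ R.subgroupOf (Subgroup.normalizer (R : Set G)))) := by
  constructor
  · exact ⟨fun hA => stable_A_to_B hp hA,
      fun hB => stable_C_to_A (stable_B_to_C hB)⟩
  · exact ⟨fun hA => stable_B_to_C (stable_A_to_B hp hA),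
      fun hC => stable_C_to_A hC⟩
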